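/- arXiv:2309.17283 — 2 statements merged into one kernel-verified Lean document; each statement's English description precedes it below -/
import Mathlib

section
/- Let Z be a metric space equipped with its Borel σ-algebra, X a measurable space, and κ : Z → Measure X a measurable family of probability measures that is L-Lipschitz with respect to total variation distance, i.e. |κ(z)(s) − κ(z')(s)| ≤ L · dist(z, z') for all measurable sets s ⊆ X and all z, z' ∈ Z. Let λ be a probability measure on Z, let V ⊆ Z be a Borel set with λ(V) = 1, let z₀ ∈ V, and let ε > 0 be such that dist(z, z₀) ≤ ε/L for every z ∈ V. Then the mixture μ := λ.bind κ satisfies |μ(s) − κ(z₀)(s)| ≤ ε for every measurable set s ⊆ X; that is, TV(μ, κ(z₀)) ≤ ε. -/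
open MeasureTheory

/-- If `z ↦ κ z` is an `L`-Lipschitz (in TV distance) family of probability measures and `λ`
is a probability measure supported on a set `V` of points at distance at most `ε / L` from
`z₀ ∈ V`, then the mixture `λ.bind κ` is within TV distance `ε` of `κ z₀`. -/
theorem mixture_tv_close_of_tv_lipschitz
    {Z X : Type*} [MetricSpace Z] [MeasurableSpace Z] [BorelSpace Z] [MeasurableSpace X]
    (κ : Z → Measure X) (hκ : Measurable κ)
    (hκprob : ∀ z, IsProbabilityMeasure (κ z))
    (L : ℝ)
    (hLip : ∀ s : Set X, MeasurableSet s → ∀ z z' : Z,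
      |((κ z) s).toReal - ((κ z') s).toReal| ≤ L * dist z z')
    (lam : Measure Z) [IsProbabilityMeasure lam]
    (V : Set Z) (hV : MeasurableSet V) (hVfull : lam V = 1)
    (z₀ : Z) (hz₀ : z₀ ∈ V)
    (ε : ℝ) (hε : 0 < ε)
    (hdiam : ∀ z ∈ V, dist z z₀ ≤ ε / L) :
    ∀ s : Set X, MeasurableSet s →
      |((lam.bind κ) s).toReal - ((κ z₀) s).toReal| ≤ ε := by
  intro s hs
  have hmeas : Measurable fun z => (κ z) s := (Measure.measurable_coe hs).comp hκ
  have hbind : (lam.bind κ) s = ∫⁻ z, (κ z) s ∂lam :=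
    Measure.bind_apply hs hκ.aemeasurable
  have hlt : ∀ z, (κ z) s < ⊤ := fun z =>
    lt_of_le_of_lt (measure_mono (Set.subset_univ s))
      (by simp [(hκprob z).measure_univ])
  have htoReal : ((lam.bind κ) s).toReal = ∫ z, ((κ z) s).toReal ∂lam := by
    rw [hbind, integral_toReal hmeas.aemeasurable (Filter.Eventually.of_forall hlt)]
  set g : Z → ℝ := fun z => ((κ z) s).toReal with hg
  have hgmeas : Measurable g := hmeas.ennreal_toReal
  have hgbound : ∀ z, ‖g z‖ ≤ 1 := by
    intro z
    rw [Real.norm_eq_abs, abs_of_nonneg ENNReal.toReal_nonneg]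
    exact ENNReal.toReal_le_of_le_ofReal zero_le_one
      (by simpa using measure_mono (Set.subset_univ s) |>.trans_eq (hκprob z).measure_univ)
  have hgint : Integrable g lam :=
    (integrable_const (1 : ℝ)).mono' hgmeas.aestronglyMeasurable
      (Filter.Eventually.of_forall hgbound)
  set c : ℝ := ((κ z₀) s).toReal with hc
  -- ae bound on V
  have haeV : ∀ᵐ z ∂lam, z ∈ V := by
    rw [MeasureTheory.ae_iff]
    have : lam Vᶜ = 0 := by
      rw [measure_compl hV (measure_ne_top lam V), measure_univ, hVfull, tsub_self]
    exact this
  have hbound : ∀ᵐ z ∂lam, ‖g z - c‖ ≤ ε := by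
    filter_upwards [haeV] with z hzV
    rw [Real.norm_eq_abs]
    have h1 : |g z - c| ≤ L * dist z z₀ := hLip s hs z z₀
    rcases le_or_gt L 0 with hL | hL
    · exact h1.trans ((mul_nonpos_of_nonpos_of_nonneg hL dist_nonneg).trans hε.le)
    · refine h1.trans ?_
      calc L * dist z z₀ ≤ L * (ε / L) := by
            exact mul_le_mul_of_nonneg_left (hdiam z hzV) hL.le
        _ = ε := by field_simp
  have hintc : ∫ _ : Z, c ∂lam = c := by simp
  rw [htoReal]
  have : ∫ z, g z ∂lam - c = ∫ z, (g z - c) ∂lam := by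
    rw [integral_sub hgint (integrable_const c), hintc]
  rw [show |(∫ z, g z ∂lam) - c| = ‖∫ z, (g z - c) ∂lam‖ by
    rw [this, Real.norm_eq_abs]]
  calc ‖∫ z, (g z - c) ∂lam‖ ≤ ∫ _ : Z, ε ∂lam :=
        norm_integral_le_of_norm_le (integrable_const ε) hbound
    _ = ε := by simp
end

section
/- Let L, M ≥ 0 and let g : ℝ³ → ℝ be measurable with |g(x,y,z)| ≤ M for all (x,y,z) ∈ [0,1]³ and |g(x,y,z) − g(x,y,z')| ≤ L·|z − z'| for all (x,y) ∈ [0,1]² and all z, z' ∈ [0,1]. For z ∈ [0,1] define the normalized tilted density on the unit square f_z(x,y) = exp(g(x,y,z)) / ∫_{[0,1]²} exp(g(x',y',z)) dx' dy'. Then for all z, z' ∈ [0,1], (1/2) ∫_{[0,1]²} |f_z(x,y) − f_{z'}(x,y)| dx dy ≤ (e^{2L} − 1) · |z − z'|; that is, the family z ↦ f_z is Lipschitz in total variation distance with Lipschitz constant e^{2L} − 1. -/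
open MeasureTheory Real

/-- Exponential tilting on the unit square: if `g` is bounded by `M` on `[0,1]³` and
`L`-Lipschitz in its third variable on `[0,1]³`, then the normalized densities
`f_z(x,y) = exp(g x y z) / ∫∫ exp(g x' y' z)` form a family that is `(e^{2L} - 1)`-Lipschitz
in total variation distance as a function of `z ∈ [0,1]`. -/
theorem exponential_tilting_tv_lipschitz
    (L M : ℝ) (hL : 0 ≤ L) (hM : 0 ≤ M)
    (g : ℝ → ℝ → ℝ → ℝ)
    (hg_meas : Measurable fun p : ℝ × ℝ × ℝ => g p.1 p.2.1 p.2.2)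
    (hg_bdd : ∀ x ∈ Set.Icc (0:ℝ) 1, ∀ y ∈ Set.Icc (0:ℝ) 1, ∀ z ∈ Set.Icc (0:ℝ) 1,
      |g x y z| ≤ M)
    (hg_lip : ∀ x ∈ Set.Icc (0:ℝ) 1, ∀ y ∈ Set.Icc (0:ℝ) 1,
      ∀ z ∈ Set.Icc (0:ℝ) 1, ∀ z' ∈ Set.Icc (0:ℝ) 1,
      |g x y z - g x y z'| ≤ L * |z - z'|)
    (f : ℝ → ℝ → ℝ → ℝ)
    (hf : ∀ z x y, f z x y =
      exp (g x y z) /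
        ∫ x' in Set.Icc (0:ℝ) 1, ∫ y' in Set.Icc (0:ℝ) 1, exp (g x' y' z)) :
    ∀ z ∈ Set.Icc (0:ℝ) 1, ∀ z' ∈ Set.Icc (0:ℝ) 1,
      (1 / 2) * ∫ x in Set.Icc (0:ℝ) 1, ∫ y in Set.Icc (0:ℝ) 1, |f z x y - f z' x y| ≤
        (exp (2 * L) - 1) * |z - z'| := by
  intro z hz z' hz'
  simp only [hf]
  set S := Set.Icc (0:ℝ) 1 with hSdef
  have hSm : MeasurableSet S := measurableSet_Icc
  have hSvol : volume S = 1 := by simp [hSdef]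
  have hSfin : volume S < ⊤ := by rw [hSvol]; exact ENNReal.one_lt_top
  -- measurability
  have meas_xy : ∀ w, Measurable fun p : ℝ × ℝ => exp (g p.1 p.2 w) := fun w =>
    (hg_meas.comp (measurable_fst.prodMk (measurable_snd.prodMk measurable_const))).exp
  have meas_y : ∀ x w, Measurable fun y : ℝ => exp (g x y w) := fun x w =>
    (hg_meas.comp (measurable_const.prodMk (measurable_id.prodMk measurable_const))).exp
  -- integrability of the inner function
  have int_y : ∀ w ∈ S, ∀ x ∈ S, IntegrableOn (fun y => exp (g x y w)) S := by
    intro w hw x hx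
    refine Integrable.mono' (g := fun _ => exp M)
      (integrableOn_const hSfin.ne) (meas_y x w).aestronglyMeasurable ?_
    filter_upwards [ae_restrict_mem hSm] with y hy
    rw [norm_of_nonneg (exp_pos _).le]
    exact exp_le_exp.2 ((abs_le.1 (hg_bdd x hx y hy w hw)).2)
  have h_nonneg : ∀ w x, 0 ≤ ∫ y in S, exp (g x y w) := fun w x =>
    setIntegral_nonneg hSm fun y _ => (exp_pos _).le
  have h_le : ∀ w ∈ S, ∀ x ∈ S, ∫ y in S, exp (g x y w) ≤ exp M := by
    intro w hw x hx
    calc ∫ y in S, exp (g x y w) ≤ ∫ _y in S, exp M := by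
          refine setIntegral_mono_on (int_y w hw x hx)
            (integrableOn_const hSfin.ne) hSm ?_
          intro y hy
          exact exp_le_exp.2 ((abs_le.1 (hg_bdd x hx y hy w hw)).2)
      _ = exp M := by simp [hSvol, measureReal_def]
  have h_ge : ∀ w ∈ S, ∀ x ∈ S, exp (-M) ≤ ∫ y in S, exp (g x y w) := by
    intro w hw x hx
    calc exp (-M) = ∫ _y in S, exp (-M) := by simp [hSvol, measureReal_def]
      _ ≤ ∫ y in S, exp (g x y w) := by
          refine setIntegral_mono_on (integrableOn_const hSfin.ne)
            (int_y w hw x hx) hSm ?_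
          intro y hy
          exact exp_le_exp.2 (by linarith [(abs_le.1 (hg_bdd x hx y hy w hw)).1])
  have meas_h : ∀ w, StronglyMeasurable fun x => ∫ y in S, exp (g x y w) := by
    intro w
    exact StronglyMeasurable.integral_prod_right (f := fun x y => exp (g x y w))
      (meas_xy w).stronglyMeasurable
  have int_h : ∀ w ∈ S, IntegrableOn (fun x => ∫ y in S, exp (g x y w)) S := by
    intro w hw
    refine Integrable.mono' (g := fun _ => exp M)
      (integrableOn_const hSfin.ne) (meas_h w).aestronglyMeasurable ?_
    filter_upwards [ae_restrict_mem hSm] with x hx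
    rw [norm_of_nonneg (h_nonneg w x)]
    exact h_le w hw x hx
  -- positivity of normalizers
  have hB_ge : ∀ w ∈ S, exp (-M) ≤ ∫ x in S, ∫ y in S, exp (g x y w) := by
    intro w hw
    calc exp (-M) = ∫ _x in S, exp (-M) := by simp [hSvol, measureReal_def]
      _ ≤ _ := setIntegral_mono_on (integrableOn_const hSfin.ne)
            (int_h w hw) hSm (fun x hx => h_ge w hw x hx)
  set A := ∫ x in S, ∫ y in S, exp (g x y z) with hAdef
  set B := ∫ x in S, ∫ y in S, exp (g x y z') with hBdef
  have hA : 0 < A := lt_of_lt_of_le (exp_pos _) (hB_ge z hz)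
  have hB : 0 < B := lt_of_lt_of_le (exp_pos _) (hB_ge z' hz')
  set u := exp (L * |z - z'|) with hudef
  have hu1 : 1 ≤ u := one_le_exp (mul_nonneg hL (abs_nonneg _))
  -- pointwise comparison
  have pt_le : ∀ x ∈ S, ∀ y ∈ S, exp (g x y z) ≤ u * exp (g x y z') := by
    intro x hx y hy
    rw [hudef, ← exp_add]
    exact exp_le_exp.2 (by linarith [(abs_le.1 (hg_lip x hx y hy z hz z' hz')).2])
  have pt_le' : ∀ x ∈ S, ∀ y ∈ S, exp (g x y z') ≤ u * exp (g x y z) := by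
    intro x hx y hy
    rw [hudef, ← exp_add]
    have := (abs_le.1 (hg_lip x hx y hy z' hz' z hz)).2
    rw [abs_sub_comm] at this
    exact exp_le_exp.2 (by linarith)
  have hin_le : ∀ x ∈ S, ∫ y in S, exp (g x y z) ≤ u * ∫ y in S, exp (g x y z') := by
    intro x hx
    rw [← integral_const_mul]
    exact setIntegral_mono_on (int_y z hz x hx) ((int_y z' hz' x hx).const_mul u) hSm
      (fun y hy => pt_le x hx y hy)
  have hin_le' : ∀ x ∈ S, ∫ y in S, exp (g x y z') ≤ u * ∫ y in S, exp (g x y z) := by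
    intro x hx
    rw [← integral_const_mul]
    exact setIntegral_mono_on (int_y z' hz' x hx) ((int_y z hz x hx).const_mul u) hSm
      (fun y hy => pt_le' x hx y hy)
  have hAB : A ≤ u * B := by
    rw [hAdef, hBdef, ← integral_const_mul]
    exact setIntegral_mono_on (int_h z hz) ((int_h z' hz').const_mul u) hSm
      (fun x hx => hin_le x hx)
  have hBA : B ≤ u * A := by
    rw [hAdef, hBdef, ← integral_const_mul]
    exact setIntegral_mono_on (int_h z' hz') ((int_h z hz).const_mul u) hSm
      (fun x hx => hin_le' x hx)
  -- pointwise bound on the difference of densities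
  have key : ∀ x ∈ S, ∀ y ∈ S,
      |exp (g x y z) / A - exp (g x y z') / B| ≤ (u ^ 2 - 1) * (exp (g x y z') / B) := by
    intro x hx y hy
    set a := exp (g x y z) with hadef
    set b := exp (g x y z') with hbdef
    have ha : 0 < a := exp_pos _
    have hb : 0 < b := exp_pos _
    have h1 : a ≤ u * b := pt_le x hx y hy
    have h2 : b ≤ u * a := pt_le' x hx y hy
    rw [div_sub_div _ _ hA.ne' hB.ne', abs_div, abs_of_pos (mul_pos hA hB),
      div_le_iff₀ (mul_pos hA hB)]
    have hrw : (u ^ 2 - 1) * (b / B) * (A * B) = (u ^ 2 - 1) * (b * A) := by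
      field_simp
    rw [hrw, abs_le]
    constructor
    · have p1 : b * A ≤ (u * a) * (u * B) :=
        mul_le_mul h2 hAB hA.le (by positivity)
      have hu2 : (1:ℝ) ≤ u ^ 2 := by nlinarith
      nlinarith [mul_pos ha hB, mul_pos hb hA, sq_nonneg (u ^ 2 - 1), hu1,
        mul_nonneg (mul_nonneg (sub_nonneg.2 hu2) hb.le) hA.le]
    · have p2 : a * B ≤ (u * b) * (u * A) :=
        mul_le_mul h1 hBA hB.le (by positivity)
      nlinarith [mul_pos hb hA]
  -- integrate the pointwise bound
  have int_abs : ∀ x ∈ S,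
      IntegrableOn (fun y => |exp (g x y z) / A - exp (g x y z') / B|) S := by
    intro x hx
    exact (((int_y z hz x hx).div_const A).sub ((int_y z' hz' x hx).div_const B)).abs
  have inner_bd : ∀ x ∈ S,
      ∫ y in S, |exp (g x y z) / A - exp (g x y z') / B|
        ≤ (u ^ 2 - 1) * ((∫ y in S, exp (g x y z')) / B) := by
    intro x hx
    rw [← integral_div, ← integral_const_mul]
    exact setIntegral_mono_on (int_abs x hx)
      (((int_y z' hz' x hx).div_const B).const_mul _) hSm (fun y hy => key x hx y hy)
  have meas_outer : StronglyMeasurable fun x =>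
      ∫ y in S, |exp (g x y z) / A - exp (g x y z') / B| := by
    have : Measurable fun p : ℝ × ℝ => |exp (g p.1 p.2 z) / A - exp (g p.1 p.2 z') / B| :=
      (((meas_xy z).div_const A).sub ((meas_xy z').div_const B)).abs
    exact StronglyMeasurable.integral_prod_right
      (f := fun x y => |exp (g x y z) / A - exp (g x y z') / B|) this.stronglyMeasurable
  have int_outer : IntegrableOn
      (fun x => ∫ y in S, |exp (g x y z) / A - exp (g x y z') / B|) S := by
    refine Integrable.mono' (g := fun _ => (u ^ 2 - 1) * (exp M / B))
      (integrableOn_const hSfin.ne) meas_outer.aestronglyMeasurable ?_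
    filter_upwards [ae_restrict_mem hSm] with x hx
    rw [norm_of_nonneg (setIntegral_nonneg hSm fun y _ => abs_nonneg _)]
    calc ∫ y in S, |exp (g x y z) / A - exp (g x y z') / B|
        ≤ (u ^ 2 - 1) * ((∫ y in S, exp (g x y z')) / B) := inner_bd x hx
      _ ≤ (u ^ 2 - 1) * (exp M / B) := by
          apply mul_le_mul_of_nonneg_left _ (by nlinarith)
          exact div_le_div_of_nonneg_right (h_le z' hz' x hx) hB.le
  have outer : ∫ x in S, ∫ y in S, |exp (g x y z) / A - exp (g x y z') / B|
      ≤ u ^ 2 - 1 := by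
    calc ∫ x in S, ∫ y in S, |exp (g x y z) / A - exp (g x y z') / B|
        ≤ ∫ x in S, (u ^ 2 - 1) * ((∫ y in S, exp (g x y z')) / B) :=
          setIntegral_mono_on int_outer
            (((int_h z' hz').div_const B).const_mul _) hSm (fun x hx => inner_bd x hx)
      _ = (u ^ 2 - 1) * (B / B) := by
          rw [integral_const_mul, integral_div]
      _ = u ^ 2 - 1 := by rw [div_self hB.ne']; ring
  -- conclude via convexity of exp
  set d := |z - z'| with hddef
  have hd0 : 0 ≤ d := abs_nonneg _
  have hd1 : d ≤ 1 := by
    obtain ⟨hz0, hz1⟩ := hz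
    obtain ⟨hz0', hz1'⟩ := hz'
    rw [hddef, abs_le]
    constructor <;> linarith
  have hu2 : u ^ 2 = exp (d * (2 * L)) := by
    rw [hudef, sq, ← exp_add]
    ring_nf
  have conv : exp (d * (2 * L)) ≤ (1 - d) * 1 + d * exp (2 * L) := by
    have h := convexOn_exp.2 (Set.mem_univ 0) (Set.mem_univ (2 * L))
      (by linarith : (0:ℝ) ≤ 1 - d) hd0 (by ring)
    simpa [smul_eq_mul] using h
  have hexp1 : 1 ≤ exp (2 * L) := one_le_exp (by linarith)
  nlinarith [outer, conv, hu2, mul_nonneg hd0 (sub_nonneg.2 hexp1)]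
end
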